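/- arXiv:2502.07488 — 2 statements merged into one kernel-verified Lean document; each statement's English description precedes it below -/
import Mathlib

section
/- Consider the Adam ODE: dW/dt = -M/(√V + ε) (elementwise), dM/dt = G - M, dV/dt = G² - V, where G = ∇L(W) and ε > 0, with V having positive entries along the trajectory. Then the Hamiltonian H(W, M, V) = L(W) + (1/2)⟨M/(√V + ε), M⟩ satisfies dH/dt ≤ 0 along trajectories. -/
open Matrix

attribute [local instance] Matrix.frobeniusNormedAddCommGroup Matrix.frobeniusNormedSpace

/-- Frobenius inner product of matrices. -/
def mInner {m n : ℕ} (A B : Matrix (Fin m) (Fin n) ℝ) : ℝ :=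
  ∑ i, ∑ j, A i j * B i j

lemma entry_nonpos (g μ v ε : ℝ) (hv : 0 < v) (hε : 0 < ε) :
    g * -(μ / (Real.sqrt v + ε)) + 1 / 2 *
      (((g - μ) * (Real.sqrt v + ε) - μ * ((g ^ 2 - v) / (2 * Real.sqrt v))) /
          (Real.sqrt v + ε) ^ 2 * μ + μ / (Real.sqrt v + ε) * (g - μ)) ≤ 0 := by
  set s := Real.sqrt v with hs
  have hspos : 0 < s := Real.sqrt_pos.2 hv
  have hs2 : s ^ 2 = v := Real.sq_sqrt hv.le
  have hapos : 0 < s + ε := by linarith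
  have key : g * -(μ / (s + ε)) + 1 / 2 *
      (((g - μ) * (s + ε) - μ * ((g ^ 2 - v) / (2 * s))) / (s + ε) ^ 2 * μ +
        μ / (s + ε) * (g - μ))
      = -(μ ^ 2 * (3 * s ^ 2 + 4 * s * ε + g ^ 2) / (4 * s * (s + ε) ^ 2)) := by
    rw [← hs2]
    field_simp
    ring
  rw [key, neg_nonpos]
  have h1 : 0 ≤ 3 * s ^ 2 + 4 * s * ε + g ^ 2 := by positivity
  positivity

/-- Along trajectories of the Adam ODE
dW/dt = -M/(√V+ε), dM/dt = G - M, dV/dt = G² - V (elementwise, G = ∇L(W)),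
with ε > 0 and V entrywise positive, the Hamiltonian
H(W,M,V) = L(W) + (1/2)⟨M/(√V+ε), M⟩ is non-increasing: dH/dt ≤ 0. -/
theorem adam_ode_hamiltonian_descent {m n : ℕ}
    (L : Matrix (Fin m) (Fin n) ℝ → ℝ)
    (G : Matrix (Fin m) (Fin n) ℝ → Matrix (Fin m) (Fin n) ℝ)
    (l : Matrix (Fin m) (Fin n) ℝ → (Matrix (Fin m) (Fin n) ℝ →L[ℝ] ℝ))
    (hL : ∀ X, HasFDerivAt L (l X) X)
    (hl : ∀ X H, l X H = mInner (G X) H)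
    (ε : ℝ) (hε : 0 < ε)
    (W M V : ℝ → Matrix (Fin m) (Fin n) ℝ)
    (hV : ∀ t i j, 0 < V t i j)
    (hW : ∀ t i j, HasDerivAt (fun s => W s i j)
      (-(M t i j / (Real.sqrt (V t i j) + ε))) t)
    (hM : ∀ t i j, HasDerivAt (fun s => M s i j) (G (W t) i j - M t i j) t)
    (hVd : ∀ t i j, HasDerivAt (fun s => V s i j) ((G (W t) i j) ^ 2 - V t i j) t) :
    ∀ t D, HasDerivAt (fun s => L (W s) +
        (1 / 2) * mInner (Matrix.of fun i j => M s i j / (Real.sqrt (V s i j) + ε)) (M s))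
        D t → D ≤ 0 := by
  intro t D hD
  have hsq : ∀ i j, (0:ℝ) < Real.sqrt (V t i j) := fun i j => Real.sqrt_pos.2 (hV t i j)
  have hap : ∀ i j, (0:ℝ) < Real.sqrt (V t i j) + ε := fun i j => by
    have := hsq i j; linarith
  -- derivative of W as a matrix-valued function
  have hWmat : HasDerivAt (fun s => W s)
      (Matrix.of fun i j => -(M t i j / (Real.sqrt (V t i j) + ε))) t := by
    have h : HasDerivAt (fun s => ∑ i, ∑ j, Matrix.single i j (W s i j))
        (∑ i, ∑ j, Matrix.single i j (-(M t i j / (Real.sqrt (V t i j) + ε)))) t := by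
      refine HasDerivAt.fun_sum fun i _ => HasDerivAt.fun_sum fun j _ => ?_
      have := (hW t i j).smul_const (Matrix.single i j (1:ℝ))
      simpa only [Matrix.smul_single, smul_eq_mul, mul_one] using this
    have e1 : (fun s => ∑ i, ∑ j, Matrix.single i j (W s i j)) = fun s => W s := by
      funext s; exact (Matrix.matrix_eq_sum_single (W s)).symm
    have e2 : (∑ i, ∑ j, Matrix.single i j (-(M t i j / (Real.sqrt (V t i j) + ε))))
        = Matrix.of fun i j => -(M t i j / (Real.sqrt (V t i j) + ε)) := by
      exact (Matrix.matrix_eq_sum_single _).symm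
    rw [e1, e2] at h; exact h
  have h1 : HasDerivAt (fun s => L (W s))
      (mInner (G (W t)) (Matrix.of fun i j => -(M t i j / (Real.sqrt (V t i j) + ε)))) t := by
    have := (hL (W t)).comp_hasDerivAt t hWmat
    rw [← hl]; exact this
  have h2 : HasDerivAt (fun s => (1:ℝ) / 2 *
      mInner (Matrix.of fun i j => M s i j / (Real.sqrt (V s i j) + ε)) (M s))
      ((1:ℝ)/2 * ∑ i, ∑ j,
        (((G (W t) i j - M t i j) * (Real.sqrt (V t i j) + ε) -
            M t i j * ((G (W t) i j ^ 2 - V t i j) / (2 * Real.sqrt (V t i j)))) /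
          (Real.sqrt (V t i j) + ε) ^ 2 * M t i j +
         M t i j / (Real.sqrt (V t i j) + ε) * (G (W t) i j - M t i j))) t := by
    refine HasDerivAt.const_mul _ ?_
    simp only [mInner, Matrix.of_apply]
    refine HasDerivAt.fun_sum fun i _ => HasDerivAt.fun_sum fun j _ => ?_
    exact ((hM t i j).div (((hVd t i j).sqrt (hV t i j).ne').add_const ε)
      (hap i j).ne').mul (hM t i j)
  have htot := h1.add h2
  have hDeq := hD.unique htot
  rw [hDeq]
  have : mInner (G (W t)) (Matrix.of fun i j => -(M t i j / (Real.sqrt (V t i j) + ε)))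
      = ∑ i, ∑ j, G (W t) i j * -(M t i j / (Real.sqrt (V t i j) + ε)) := by
    simp [mInner]
  rw [this, Finset.mul_sum, ← Finset.sum_add_distrib]
  refine Finset.sum_nonpos fun i _ => ?_
  rw [Finset.mul_sum, ← Finset.sum_add_distrib]
  refine Finset.sum_nonpos fun j _ => ?_
  exact entry_nonpos _ _ _ _ (hV t i j) hε
end

section
/- In the Adam ODE setting, the time derivative of the Hamiltonian satisfies dH/dt ≤ -(1/4)⟨M²/(√V ⊙ (√V + ε)²), G²⟩ ≤ 0, where ⊙ is elementwise product and G = ∇L(W). -/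
open Matrix

attribute [local instance] Matrix.frobeniusNormedAddCommGroup Matrix.frobeniusNormedSpace

private lemma hasDerivAt_matrix {m n : ℕ} {f : ℝ → Matrix (Fin m) (Fin n) ℝ}
    {f' : Matrix (Fin m) (Fin n) ℝ} {t : ℝ}
    (h : ∀ i j, HasDerivAt (fun s => f s i j) (f' i j) t) :
    HasDerivAt f f' t := by
  have key : HasDerivAt (fun s => ∑ i, ∑ j, (f s i j) • Matrix.single i j (1 : ℝ))
      (∑ i, ∑ j, (f' i j) • Matrix.single i j (1 : ℝ)) t := by
    apply HasDerivAt.fun_sum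
    intro i _
    apply HasDerivAt.fun_sum
    intro j _
    exact (h i j).smul_const _
  have hfun : (fun s => ∑ i, ∑ j, (f s i j) • Matrix.single i j (1 : ℝ)) = f := by
    funext s
    simp only [Matrix.smul_single, smul_eq_mul, mul_one]
    exact (Matrix.matrix_eq_sum_single (f s)).symm
  have hder : (∑ i, ∑ j, (f' i j) • Matrix.single i j (1 : ℝ)) = f' := by
    simp only [Matrix.smul_single, smul_eq_mul, mul_one]
    exact (Matrix.matrix_eq_sum_single f').symm
  rw [hfun, hder] at key
  exact key

/-- In the Adam ODE setting (dW/dt = -M/(√V+ε), dM/dt = G - M, dV/dt = G² - V,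
G = ∇L(W), ε > 0, V entrywise positive), the time derivative of
H = L(W) + (1/2)⟨M/(√V+ε), M⟩ satisfies
dH/dt ≤ -(1/4)⟨M²/(√V ⊙ (√V+ε)²), G²⟩ ≤ 0. -/
theorem adam_ode_hamiltonian_descent_bound {m n : ℕ}
    (L : Matrix (Fin m) (Fin n) ℝ → ℝ)
    (G : Matrix (Fin m) (Fin n) ℝ → Matrix (Fin m) (Fin n) ℝ)
    (l : Matrix (Fin m) (Fin n) ℝ → (Matrix (Fin m) (Fin n) ℝ →L[ℝ] ℝ))
    (hL : ∀ X, HasFDerivAt L (l X) X)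
    (hl : ∀ X H, l X H = mInner (G X) H)
    (ε : ℝ) (hε : 0 < ε)
    (W M V : ℝ → Matrix (Fin m) (Fin n) ℝ)
    (hV : ∀ t i j, 0 < V t i j)
    (hW : ∀ t i j, HasDerivAt (fun s => W s i j)
      (-(M t i j / (Real.sqrt (V t i j) + ε))) t)
    (hM : ∀ t i j, HasDerivAt (fun s => M s i j) (G (W t) i j - M t i j) t)
    (hVd : ∀ t i j, HasDerivAt (fun s => V s i j) ((G (W t) i j) ^ 2 - V t i j) t) :
    ∀ t D, HasDerivAt (fun s => L (W s) +
        (1 / 2) * mInner (Matrix.of fun i j => M s i j / (Real.sqrt (V s i j) + ε)) (M s))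
        D t →
      D ≤ -(1 / 4) * mInner
            (Matrix.of fun i j => (M t i j) ^ 2 /
              (Real.sqrt (V t i j) * (Real.sqrt (V t i j) + ε) ^ 2))
            (Matrix.of fun i j => (G (W t) i j) ^ 2) ∧
      -(1 / 4) * mInner
            (Matrix.of fun i j => (M t i j) ^ 2 /
              (Real.sqrt (V t i j) * (Real.sqrt (V t i j) + ε) ^ 2))
            (Matrix.of fun i j => (G (W t) i j) ^ 2) ≤ 0 := by
  intro t D hD
  -- entrywise positivity facts
  have hs : ∀ i j, 0 < Real.sqrt (V t i j) := fun i j => Real.sqrt_pos.mpr (hV t i j)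
  have hd : ∀ i j, 0 < Real.sqrt (V t i j) + ε := fun i j => by positivity
  -- derivative of W as a matrix-valued function
  have hW' : HasDerivAt W
      (Matrix.of fun i j => -(M t i j / (Real.sqrt (V t i j) + ε))) t :=
    hasDerivAt_matrix fun i j => hW t i j
  have hLW : HasDerivAt (fun s => L (W s))
      (l (W t) (Matrix.of fun i j => -(M t i j / (Real.sqrt (V t i j) + ε)))) t :=
    (hL (W t)).comp_hasDerivAt t hW'
  -- derivative of each quadratic entry
  have hq : ∀ i j, HasDerivAt (fun s => M s i j / (Real.sqrt (V s i j) + ε) * M s i j)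
      (((G (W t) i j - M t i j) * (Real.sqrt (V t i j) + ε) -
          M t i j * (((G (W t) i j) ^ 2 - V t i j) / (2 * Real.sqrt (V t i j)))) /
          (Real.sqrt (V t i j) + ε) ^ 2 * M t i j +
        M t i j / (Real.sqrt (V t i j) + ε) * (G (W t) i j - M t i j)) t := by
    intro i j
    exact ((hM t i j).div (((hVd t i j).sqrt (hV t i j).ne').add_const ε)
      (hd i j).ne').mul (hM t i j)
  have hsum : HasDerivAt
      (fun s => ∑ i, ∑ j, M s i j / (Real.sqrt (V s i j) + ε) * M s i j)
      (∑ i, ∑ j, (((G (W t) i j - M t i j) * (Real.sqrt (V t i j) + ε) -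
          M t i j * (((G (W t) i j) ^ 2 - V t i j) / (2 * Real.sqrt (V t i j)))) /
          (Real.sqrt (V t i j) + ε) ^ 2 * M t i j +
        M t i j / (Real.sqrt (V t i j) + ε) * (G (W t) i j - M t i j))) t := by
    apply HasDerivAt.fun_sum; intro i _
    apply HasDerivAt.fun_sum; intro j _
    exact hq i j
  have hH : HasDerivAt (fun s => L (W s) +
      (1 / 2) * mInner (Matrix.of fun i j => M s i j / (Real.sqrt (V s i j) + ε)) (M s))
      (l (W t) (Matrix.of fun i j => -(M t i j / (Real.sqrt (V t i j) + ε))) +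
       (1 / 2) * (∑ i, ∑ j, (((G (W t) i j - M t i j) * (Real.sqrt (V t i j) + ε) -
          M t i j * (((G (W t) i j) ^ 2 - V t i j) / (2 * Real.sqrt (V t i j)))) /
          (Real.sqrt (V t i j) + ε) ^ 2 * M t i j +
        M t i j / (Real.sqrt (V t i j) + ε) * (G (W t) i j - M t i j)))) t := by
    simp only [mInner, Matrix.of_apply]
    exact hLW.add (hsum.const_mul _)
  have hDeq := hD.unique hH
  -- the second (nonnegativity) claim
  have h0 : 0 ≤ ∑ i, ∑ j, (M t i j) ^ 2 /
      (Real.sqrt (V t i j) * (Real.sqrt (V t i j) + ε) ^ 2) * (G (W t) i j) ^ 2 := by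
    refine Finset.sum_nonneg fun i _ => Finset.sum_nonneg fun j _ => ?_
    exact mul_nonneg (div_nonneg (sq_nonneg _)
      (mul_nonneg (Real.sqrt_nonneg _) (sq_nonneg _))) (sq_nonneg _)
  constructor
  · rw [hDeq, hl]
    simp only [mInner, Matrix.of_apply]
    simp only [Finset.mul_sum, ← Finset.sum_add_distrib]
    refine Finset.sum_le_sum fun i _ => ?_
    refine Finset.sum_le_sum fun j _ => ?_
    set a := M t i j
    set g := G (W t) i j
    set s := Real.sqrt (V t i j) with hsdef
    have hs' : 0 < s := hs i j
    have hd' : 0 < s + ε := hd i j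
    have hsv : s ^ 2 = V t i j := Real.sq_sqrt (hV t i j).le
    rw [← hsv]
    have hsd : s ≤ s + ε := by linarith
    have e1 : g * -(a / (s + ε)) + 1 / 2 *
        (((g - a) * (s + ε) - a * ((g ^ 2 - s ^ 2) / (2 * s))) / (s + ε) ^ 2 * a +
          a / (s + ε) * (g - a)) =
        -(a ^ 2 / (s + ε)) - a ^ 2 * g ^ 2 / (4 * s * (s + ε) ^ 2) +
          a ^ 2 * s / (4 * (s + ε) ^ 2) := by
      field_simp
      ring
    have e2 : -(1 / 4) * (a ^ 2 / (s * (s + ε) ^ 2) * g ^ 2) =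
        -(a ^ 2 * g ^ 2 / (4 * s * (s + ε) ^ 2)) := by
      field_simp
    rw [e1, e2]
    have key : a ^ 2 * s / (4 * (s + ε) ^ 2) ≤ a ^ 2 / (s + ε) := by
      rw [div_le_div_iff₀ (by positivity) hd']
      nlinarith [mul_nonneg (mul_nonneg (sq_nonneg a) hd'.le) hd'.le,
        mul_le_mul_of_nonneg_left hsd (mul_nonneg (sq_nonneg a) hd'.le)]
    linarith
  · simp only [mInner, Matrix.of_apply]
    linarith
end
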